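/- If a formal power series F(z) over ℤ satisfies the Riccati equation (1 − Az)F − Bz²F′ − CzF² − 1 − Dz = 0 with integer parameters A, B, C, D, and a rational function R(z) = P(z)/Q(z) with P, Q ∈ ℤ[z], Q(0) = 1, satisfies (1 − Az)R − Bz²R′ − CzR² − 1 − Dz ≡ 0 modulo p^α (as a congruence of formal power series, for a prime p and α ≥ 1), then F(z) ≡ R(z) modulo p^α, i.e., all coefficients of F agree with those of the power series expansion of R modulo p^α. -/

import Mathlib

open PowerSeries Polynomial

/-- if a formal power series F over ℤ satisfies the Riccati equation
(1−Az)F − Bz²F′ − CzF² − 1 − Dz = 0 with A, B, C, D ∈ ℤ, and a rational function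
R = P/Q (P, Q ∈ ℤ[z], Q(0) = 1, expanded as a power series) satisfies the same
equation modulo p^α coefficientwise, then all coefficients of F and R agree
modulo p^α. -/
theorem statement19 (A B C D : ℤ) (p : ℕ) (hp : p.Prime) (α : ℕ) (hα : 1 ≤ α)
    (F : PowerSeries ℤ)
    (hF : (1 - PowerSeries.C A * PowerSeries.X) * F - PowerSeries.C B * PowerSeries.X ^ 2 * F.derivativeFun -
      PowerSeries.C C * PowerSeries.X * F ^ 2 - 1 - PowerSeries.C D * PowerSeries.X = 0)
    (P Q : Polynomial ℤ) (hQ0 : Q.coeff 0 = 1)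
    (R : PowerSeries ℤ)
    (hR : R = (P : PowerSeries ℤ) * PowerSeries.invOfUnit (Q : PowerSeries ℤ) 1)
    (hRmod : ∀ m : ℕ, (p : ℤ) ^ α ∣
      (PowerSeries.coeff m)
        ((1 - PowerSeries.C A * PowerSeries.X) * R - PowerSeries.C B * PowerSeries.X ^ 2 * R.derivativeFun -
          PowerSeries.C C * PowerSeries.X * R ^ 2 - 1 - PowerSeries.C D * PowerSeries.X)) :
    ∀ m : ℕ, (p : ℤ) ^ α ∣ (PowerSeries.coeff m) F - (PowerSeries.coeff m) R := by
  set H : PowerSeries ℤ := F - R with hH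
  have hd : H.derivativeFun = F.derivativeFun - R.derivativeFun := by
    ext n
    simp [← show ∀ f : PowerSeries ℤ, PowerSeries.derivative ℤ f = f.derivativeFun from fun _ => rfl, PowerSeries.coeff_derivativeFun, map_sub, sub_mul, hH]
  set S : PowerSeries ℤ :=
    (1 - PowerSeries.C A * PowerSeries.X) * H -
      PowerSeries.C B * PowerSeries.X ^ 2 * H.derivativeFun -
      PowerSeries.C C * PowerSeries.X * ((F + R) * H) with hSdef
  have hS : ∀ m : ℕ, (p : ℤ) ^ α ∣ (PowerSeries.coeff m) S := by
    intro m
    have : S = -(((1 - PowerSeries.C A * PowerSeries.X) * R - PowerSeries.C B * PowerSeries.X ^ 2 * R.derivativeFun -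
          PowerSeries.C C * PowerSeries.X * R ^ 2 - 1 - PowerSeries.C D * PowerSeries.X)) := by
      have := hF
      rw [hSdef, hH, hd]
      linear_combination this
    rw [this, map_neg]
    exact (hRmod m).neg_right
  intro m
  induction m using Nat.strong_induction_on with
  | _ m ih =>
    have key : (PowerSeries.coeff m) F - (PowerSeries.coeff m) R =
        (PowerSeries.coeff m) H := by simp [hH, map_sub]
    rw [key]
    -- coeff m S = H_m - A * (X*H)_m stuff
    match m with
    | 0 =>
      have h0 : (PowerSeries.coeff 0) S = (PowerSeries.coeff 0) H := by
        simp [hSdef, sub_mul, one_mul, mul_assoc, PowerSeries.coeff_zero_eq_constantCoeff]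
      rw [← h0]; exact hS 0
    | (n+1) =>
      have hXH : (PowerSeries.coeff (n+1)) (PowerSeries.C A * (PowerSeries.X * H)) =
          A * (PowerSeries.coeff n) H := by
        rw [PowerSeries.coeff_C_mul, PowerSeries.coeff_succ_X_mul]
      have ihH : ∀ j : ℕ, j ≤ n → (p : ℤ) ^ α ∣ (PowerSeries.coeff j) H := by
        intro j hj
        have := ih j (Nat.lt_succ_of_le hj)
        simpa [hH, map_sub] using this
      have hSm : (PowerSeries.coeff (n+1)) S =
          (PowerSeries.coeff (n+1)) H - A * (PowerSeries.coeff n) H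
          - B * (PowerSeries.coeff (n+1)) (PowerSeries.X ^ 2 * H.derivativeFun)
          - C * (PowerSeries.coeff n) ((F + R) * H) := by
        rw [hSdef]
        simp only [sub_mul, one_mul, map_sub, mul_assoc, PowerSeries.coeff_C_mul,
          PowerSeries.coeff_succ_X_mul]
      have hT : (p : ℤ) ^ α ∣ (PowerSeries.coeff (n+1)) (PowerSeries.X ^ 2 * H.derivativeFun) := by
        match n with
        | 0 =>
          have : (PowerSeries.coeff 1) (PowerSeries.X ^ 2 * H.derivativeFun) = 0 := by
            rw [pow_two, mul_assoc, PowerSeries.coeff_succ_X_mul, PowerSeries.coeff_zero_eq_constantCoeff]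
            simp
          rw [this]
          exact dvd_zero _
        | (k+1) =>
          have : (PowerSeries.coeff (k+2)) (PowerSeries.X ^ 2 * H.derivativeFun) =
              (PowerSeries.coeff (k+1)) H * (k+1) := by
            rw [pow_two, mul_assoc, PowerSeries.coeff_succ_X_mul, PowerSeries.coeff_succ_X_mul,
              ← show ∀ f : PowerSeries ℤ, PowerSeries.derivative ℤ f = f.derivativeFun from fun _ => rfl, PowerSeries.coeff_derivativeFun]
          rw [this]
          exact (ihH (k+1) (le_refl _)).mul_right _
      have hU : (p : ℤ) ^ α ∣ (PowerSeries.coeff n) ((F + R) * H) := by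
        rw [PowerSeries.coeff_mul]
        refine Finset.dvd_sum ?_
        rintro ⟨i, j⟩ hij
        have hj : j ≤ n := by
          have := Finset.HasAntidiagonal.mem_antidiagonal.mp hij
          omega
        exact (ihH j hj).mul_left _
      have e : (PowerSeries.coeff (n+1)) H =
          (PowerSeries.coeff (n+1)) S + A * (PowerSeries.coeff n) H
          + B * (PowerSeries.coeff (n+1)) (PowerSeries.X ^ 2 * H.derivativeFun)
          + C * (PowerSeries.coeff n) ((F + R) * H) := by
        linarith [hSm]
      rw [e]
      exact (((hS (n+1)).add ((ihH n (le_refl _)).mul_left A)).add (hT.mul_left B)).add (hU.mul_left C)
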